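/- Let n ≥ 3 be an integer, k > 0, R > 0 and v₀ ∈ ℝ, and suppose that v₀ < 0 or v₀² < 2k/((n-2) R^{n-2}). Then there is no twice continuously differentiable function X : [0,∞) → (0,∞) satisfying X″(t) = -k / X(t)^{n-1} for all t ≥ 0, X(0) = R and X′(0) = v₀. -/

import Mathlib

open Topology

/-- Finite-time collapse in the attractive case: if `v₀ < 0` or
`v₀² < 2k/((n-2) R^{n-2})`, no global positive `C²` solution of
`X″ = -k / X^{n-1}` with `X(0) = R`, `X′(0) = v₀` exists on `[0,∞)`. -/
theorem attractive_no_global_solution (n : ℕ) (hn : 3 ≤ n) (k R v₀ : ℝ)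
    (hk : 0 < k) (hR : 0 < R)
    (hv : v₀ < 0 ∨ v₀ ^ 2 < 2 * k / (((n : ℝ) - 2) * R ^ (n - 2))) :
    ¬ ∃ X : ℝ → ℝ,
      (∀ t : ℝ, 0 ≤ t → 0 < X t) ∧
      ContDiffOn ℝ 2 X (Set.Ici 0) ∧
      (∀ t : ℝ, 0 ≤ t →
        derivWithin (derivWithin X (Set.Ici 0)) (Set.Ici 0) t = -k / X t ^ (n - 1)) ∧
      X 0 = R ∧ derivWithin X (Set.Ici 0) 0 = v₀ := by
  rintro ⟨X, hpos, hC2, hODE, hX0, hV0⟩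
  set S : Set ℝ := Set.Ici (0:ℝ) with hS
  set V : ℝ → ℝ := derivWithin X S with hV
  have hUD : UniqueDiffOn ℝ S := uniqueDiffOn_Ici 0
  have hVcd : ContDiffOn ℝ 1 V S := hC2.derivWithin hUD (by norm_num)
  have hVcont : ContinuousOn V S := hVcd.continuousOn
  have hXcont : ContinuousOn X S := hC2.continuousOn
  have hn2 : (0:ℝ) < (n:ℝ) - 2 := by
    have : (3:ℝ) ≤ (n:ℝ) := by exact_mod_cast hn
    linarith
  have hXat : ∀ t : ℝ, 0 < t → HasDerivAt X (V t) t := by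
    intro t ht
    have hmem : S ∈ 𝓝 t := Ici_mem_nhds ht
    have hd : DifferentiableAt ℝ X t :=
      (hC2.contDiffAt hmem).differentiableAt (by norm_num)
    have : V t = deriv X t := derivWithin_of_mem_nhds hmem
    rw [this]; exact hd.hasDerivAt
  have hVat : ∀ t : ℝ, 0 < t → HasDerivAt V (-k / X t ^ (n-1)) t := by
    intro t ht
    have hmem : S ∈ 𝓝 t := Ici_mem_nhds ht
    have hd : DifferentiableAt ℝ V t := (hVcd.contDiffAt hmem).differentiableAt (by norm_num)
    have h1 : -k / X t ^ (n-1) = deriv V t := by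
      rw [← derivWithin_of_mem_nhds hmem, ← hODE t ht.le]
    rw [h1]; exact hd.hasDerivAt
  -- V is antitone on S
  have hVanti : AntitoneOn V S := by
    apply antitoneOn_of_deriv_nonpos (convex_Ici 0) hVcont
    · intro t ht
      rw [interior_Ici] at ht
      exact (hVat t ht).differentiableAt.differentiableWithinAt
    · intro t ht
      rw [interior_Ici] at ht
      rw [(hVat t ht).deriv, neg_div]
      have h1 : 0 < X t ^ (n-1) := pow_pos (hpos t ht.le) (n-1)
      have h2 : 0 < k / X t ^ (n-1) := div_pos hk h1
      linarith
  -- L1: if V is ever negative, contradiction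
  have L1 : ∀ a : ℝ, 0 ≤ a → V a < 0 → False := by
    intro a ha hVa
    have hganti : AntitoneOn (fun t => X t - V a * t) (Set.Ici a) := by
      apply antitoneOn_of_deriv_nonpos (convex_Ici a)
      · exact (hXcont.mono (Set.Ici_subset_Ici.2 ha)).sub
          (continuousOn_const.mul continuousOn_id)
      · intro t ht
        rw [interior_Ici] at ht
        have hta : (0:ℝ) < t := lt_of_le_of_lt ha ht
        exact ((hXat t hta).sub ((hasDerivAt_id t).const_mul (V a))).differentiableAt.differentiableWithinAt
      · intro t ht
        rw [interior_Ici] at ht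
        have hta : (0:ℝ) < t := lt_of_le_of_lt ha ht
        have hd : HasDerivAt (fun t => X t - V a * t) (V t - V a * 1) t :=
          (hXat t hta).sub ((hasDerivAt_id t).const_mul (V a))
        rw [hd.deriv, mul_one, sub_nonpos]
        exact hVanti (Set.mem_Ici.2 ha) (Set.mem_Ici.2 hta.le) ht.le
    set t₁ : ℝ := a + (X a + 1) / (-V a) with ht₁
    have hXa : 0 < X a := hpos a ha
    have hVa' : 0 < -V a := neg_pos.2 hVa
    have hfrac : 0 < (X a + 1) / (-V a) := div_pos (by linarith) hVa'
    have ht₁a : a ≤ t₁ := by simp only [ht₁]; linarith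
    have h5 : X t₁ - V a * t₁ ≤ X a - V a * a :=
      hganti (Set.self_mem_Ici) (Set.mem_Ici.2 ht₁a) ht₁a
    have hkey : V a * t₁ - V a * a = -(X a + 1) := by
      rw [ht₁]; field_simp [hVa.ne]; ring
    have : 0 < X t₁ := hpos t₁ (le_trans ha ht₁a)
    linarith
  rcases hv with hv | hv
  · exact L1 0 le_rfl (by rw [← hV0] at hv; exact hv)
  -- energy case
  · set F : ℝ → ℝ := fun t => V t ^ 2 / 2 - k / ((n:ℝ) - 2) * (X t ^ (n-2))⁻¹ with hF
    have hFanti : AntitoneOn F S := by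
      apply antitoneOn_of_deriv_nonpos (convex_Ici 0)
      · apply ContinuousOn.sub
        · exact ((hVcont.pow 2).div_const 2)
        · exact continuousOn_const.mul ((hXcont.pow _).inv₀
            (fun t ht => pow_ne_zero _ (hpos t ht).ne'))
      · intro t ht
        rw [interior_Ici] at ht
        have hx := (hpos t ht.le)
        have hd1 := ((hVat t ht).pow 2).div_const 2
        have hd2 := (((hXat t ht).pow (n-2)).inv (pow_ne_zero _ hx.ne')).const_mul (k / ((n:ℝ)-2))
        exact (hd1.sub hd2).differentiableAt.differentiableWithinAt
      · intro t ht
        rw [interior_Ici] at ht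
        have hx := hpos t ht.le
        have hd1 := ((hVat t ht).pow 2).div_const 2
        have hd2 := (((hXat t ht).pow (n-2)).inv (pow_ne_zero _ hx.ne')).const_mul (k / ((n:ℝ)-2))
        have hd := hd1.sub hd2
        rw [show deriv F t = _ from hd.deriv]
        have hcast : ((n - 2 : ℕ) : ℝ) = (n:ℝ) - 2 := by
          have : 2 ≤ n := by omega
          push_cast [Nat.cast_sub this]; ring
        have hpowsplit : (X t ^ (n-2))^2 = X t ^ (n-1) * X t ^ (n-2-1) := by
          rw [← pow_mul, ← pow_add]
          congr 1
          omega
        have hXne : X t ≠ 0 := hx.ne'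
        have h1 : X t ^ (n-1) ≠ 0 := pow_ne_zero _ hXne
        have h3 : X t ^ (n-2-1) ≠ 0 := pow_ne_zero _ hXne
        apply le_of_eq
        rw [hcast, Pi.pow_apply, hpowsplit]
        field_simp
        ring
    have hF0 : F 0 < 0 := by
      have hRp : (0:ℝ) < R ^ (n-2) := pow_pos hR _
      have hFeq : F 0 = v₀ ^ 2 / 2 - k / ((n:ℝ)-2) * (R ^ (n-2))⁻¹ := by
        simp only [hF, hV0, hX0]
      rw [hFeq]
      have hsplit : 2 * k / (((n:ℝ)-2) * R ^ (n-2)) = 2 * (k / ((n:ℝ)-2) * (R ^ (n-2))⁻¹) := by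
        field_simp
      rw [hsplit] at hv
      linarith
    have hFle : ∀ t : ℝ, 0 ≤ t → F t ≤ F 0 := fun t ht =>
      hFanti Set.self_mem_Ici (Set.mem_Ici.2 ht) ht
    set e : ℝ := -F 0 with he'
    have he : 0 < e := by simp only [he']; linarith
    have hbound : ∀ t : ℝ, 0 ≤ t → X t ^ (n-2) ≤ k / (((n:ℝ)-2) * e) := by
      intro t ht
      have h1 := hFle t ht
      have hv2 : 0 ≤ V t ^ 2 / 2 := by positivity
      have h1' : V t ^ 2 / 2 - k / ((n:ℝ)-2) * (X t ^ (n-2))⁻¹ ≤ F 0 := h1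
      have h2 : e ≤ k / ((n:ℝ)-2) * (X t ^ (n-2))⁻¹ := by
        simp only [he']; linarith
      have hxp : 0 < X t ^ (n-2) := pow_pos (hpos t ht) _
      have h4 : (X t ^ (n-2))⁻¹ * X t ^ (n-2) = 1 := inv_mul_cancel₀ hxp.ne'
      have h6 : k / ((n:ℝ)-2) * (X t ^ (n-2))⁻¹ * X t ^ (n-2) = k / ((n:ℝ)-2) := by
        field_simp
      have h3 : e * X t ^ (n-2) ≤ k / ((n:ℝ)-2) := by
        linarith [mul_le_mul_of_nonneg_right h2 hxp.le]
      rw [← div_div, le_div_iff₀ he]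
      linarith [mul_comm e (X t ^ (n-2))]
    set B : ℝ := k / (((n:ℝ)-2) * e) with hB
    set M : ℝ := max 1 B with hM
    have hM1 : (1:ℝ) ≤ M := le_max_left _ _
    have hXM : ∀ t : ℝ, 0 ≤ t → X t ≤ M := by
      intro t ht
      by_cases h : X t ≤ 1
      · exact h.trans hM1
      · push_neg at h
        have h1 : X t ≤ X t ^ (n-2) := by
          calc X t = X t ^ 1 := (pow_one _).symm
            _ ≤ X t ^ (n-2) := pow_le_pow_right₀ h.le (by omega)
        exact (h1.trans (hbound t ht)).trans (le_max_right _ _)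
    have hMpos : (0:ℝ) < M := lt_of_lt_of_le one_pos hM1
    set c : ℝ := k / M ^ (n-1) with hc'
    have hc : 0 < c := div_pos hk (pow_pos hMpos _)
    have hGanti : AntitoneOn (fun t => V t + c * t) S := by
      apply antitoneOn_of_deriv_nonpos (convex_Ici 0)
      · exact hVcont.add (continuousOn_const.mul continuousOn_id)
      · intro t ht
        rw [interior_Ici] at ht
        exact ((hVat t ht).add ((hasDerivAt_id t).const_mul c)).differentiableAt.differentiableWithinAt
      · intro t ht
        rw [interior_Ici] at ht
        have hd : HasDerivAt (fun t => V t + c * t) (-k / X t ^ (n-1) + c * 1) t :=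
          (hVat t ht).add ((hasDerivAt_id t).const_mul c)
        rw [hd.deriv, mul_one, neg_div]
        have hx : 0 < X t := hpos t ht.le
        have hle : X t ^ (n-1) ≤ M ^ (n-1) := pow_le_pow_left₀ hx.le (hXM t ht.le) _
        have : c ≤ k / X t ^ (n-1) := by
          rw [hc']
          exact div_le_div_of_nonneg_left hk.le (pow_pos hx _) hle
        linarith
    set t₂ : ℝ := (|v₀| + 1) / c with ht₂'
    have ht₂ : 0 ≤ t₂ := by positivity
    have hfin : V t₂ + c * t₂ ≤ V 0 + c * 0 :=
      hGanti Set.self_mem_Ici (Set.mem_Ici.2 ht₂) ht₂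
    have hct₂ : c * t₂ = |v₀| + 1 := by
      rw [ht₂']; field_simp
    have habs : v₀ ≤ |v₀| := le_abs_self v₀
    exact L1 t₂ ht₂ (by rw [hV0] at hfin; linarith)
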